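/- For every positive integer n with n ≡ 4 (mod 6), Q_5(n−1) = Q_11(n), where Q_5 and Q_11 count partitions into distinct parts in the residue classes ±{1,5,7,9} and ±{1,7,9,11} mod 24 respectively. -/

import Mathlib

noncomputable def countRes (δ : ℕ) (S : Finset (ZMod δ)) (n : ℕ) : ℕ :=
  Nat.card {p : n.Partition // p.parts.Nodup ∧ ∀ x ∈ p.parts, (x : ZMod δ) ∈ S}

noncomputable def Q5 (n : ℕ) : ℕ :=
  countRes 24 ({1, 5, 7, 9, 15, 17, 19, 23} : Finset (ZMod 24)) n

noncomputable def Q11 (n : ℕ) : ℕ :=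
  countRes 24 ({1, 7, 9, 11, 13, 15, 17, 23} : Finset (ZMod 24)) n

namespace OnoAux

open Finset

/-! ### States: pairs of finsets of ℕ (indices of parts in the two residue classes) -/

abbrev St := Finset ℕ × Finset ℕ

/-- charge -/
def ch (st : St) : ℤ := (st.1.card : ℤ) - st.2.card

/-- part-sum for the residue pair `(r, 24 - r)`, valued in ℤ. -/
def psum (r : ℕ) (st : St) : ℤ :=
  (st.1.sum fun a => 24 * (a : ℤ) + r) + (st.2.sum fun b => 24 * (b : ℤ) + (24 - r))

/-- reduced weight -/
def rw0 (st : St) : ℤ := (st.1.sum fun a => (a : ℤ)) + (st.2.sum fun b => (b : ℤ)) + st.2.card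

def up (A : Finset ℕ) : Finset ℕ := A.image (· + 1)

def down (A : Finset ℕ) : Finset ℕ := (A.erase 0).image (· - 1)

lemma mem_up {A : Finset ℕ} {x : ℕ} : x ∈ up A ↔ ∃ a ∈ A, a + 1 = x := by
  simp [up]

lemma mem_down {A : Finset ℕ} {x : ℕ} : x ∈ down A ↔ x + 1 ∈ A := by
  simp only [down, mem_image, mem_erase]
  constructor
  · rintro ⟨b, ⟨hb0, hb⟩, rfl⟩
    have : b - 1 + 1 = b := by omega
    rwa [this]
  · intro h
    exact ⟨x + 1, ⟨by omega, h⟩, by omega⟩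

lemma zero_not_mem_up (A : Finset ℕ) : 0 ∉ up A := by
  simp [mem_up]

lemma down_up (A : Finset ℕ) : down (up A) = A := by
  ext x; simp [mem_down, mem_up]

lemma down_insert_zero (A : Finset ℕ) : down (insert 0 A) = down A := by
  ext x; simp [mem_down]

lemma up_down (A : Finset ℕ) : up (down A) = A.erase 0 := by
  ext x
  simp only [mem_up, mem_down, mem_erase]
  constructor
  · rintro ⟨a, ha, rfl⟩; exact ⟨by omega, ha⟩
  · rintro ⟨hx, hxA⟩
    exact ⟨x - 1, by rwa [Nat.sub_add_cancel (by omega)], by omega⟩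

lemma card_up (A : Finset ℕ) : (up A).card = A.card :=
  card_image_of_injective _ (fun a b h => by omega)

lemma card_down (A : Finset ℕ) : (down A).card = (A.erase 0).card :=
  card_image_of_injOn (fun a ha b hb h => by
    simp only [mem_coe, mem_erase] at ha hb; omega)

lemma sum_up (A : Finset ℕ) (f : ℕ → ℤ) : (up A).sum f = A.sum (fun a => f (a + 1)) :=
  sum_image (fun a _ b _ h => by omega)

lemma sum_down (A : Finset ℕ) (f : ℕ → ℤ) :
    (down A).sum f = (A.erase 0).sum (fun a => f (a - 1)) :=
  sum_image (fun a ha b hb h => by simp only [mem_coe, mem_erase] at ha hb; omega)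

/-! ### The charge-raising bijection σ -/

def sig (st : St) : St :=
  (if 0 ∈ st.2 then up st.1 else insert 0 (up st.1), down st.2)

def tau (st : St) : St :=
  (down st.1, if 0 ∈ st.1 then up st.2 else insert 0 (up st.2))

lemma tau_sig (st : St) : tau (sig st) = st := by
  obtain ⟨A, B⟩ := st
  unfold sig tau
  by_cases hB : 0 ∈ B
  · simp only [hB, if_true]
    have h0 : (0 : ℕ) ∉ up A := zero_not_mem_up A
    simp only [h0, if_false, down_up, up_down]
    exact Prod.ext rfl (by rw [insert_erase hB])
  · simp only [hB, if_false]
    have h0 : (0 : ℕ) ∈ insert 0 (up A) := mem_insert_self 0 _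
    simp only [h0, if_true, down_insert_zero, down_up, up_down]
    exact Prod.ext rfl (erase_eq_of_notMem hB)

lemma sig_tau (st : St) : sig (tau st) = st := by
  obtain ⟨A, B⟩ := st
  unfold sig tau
  by_cases hA : 0 ∈ A
  · simp only [hA, if_true]
    have h0 : (0 : ℕ) ∉ up B := zero_not_mem_up B
    simp only [h0, if_false, down_up, up_down]
    exact Prod.ext (by rw [insert_erase hA]) rfl
  · simp only [hA, if_false]
    have h0 : (0 : ℕ) ∈ insert 0 (up B) := mem_insert_self 0 _
    simp only [h0, if_true, down_insert_zero, down_up, up_down]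
    exact Prod.ext (erase_eq_of_notMem hA) rfl

/-- σ as a permutation of states. -/
def sigE : Equiv.Perm St := ⟨sig, tau, tau_sig, sig_tau⟩

lemma ch_sig (st : St) : ch (sig st) = ch st + 1 := by
  obtain ⟨A, B⟩ := st
  unfold ch sig
  by_cases hB : 0 ∈ B
  · have hc : 1 ≤ B.card := card_pos.mpr ⟨0, hB⟩
    simp only [hB, if_true, card_up, card_down, card_erase_of_mem hB]
    push_cast [Nat.cast_sub hc]
    ring
  · simp only [hB, if_false, card_down, erase_eq_of_notMem hB,
      card_insert_of_notMem (zero_not_mem_up A), card_up]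
    push_cast
    ring

lemma psum_sig (r : ℕ) (st : St) : psum r (sig st) = psum r st + 24 * ch st + r := by
  obtain ⟨A, B⟩ := st
  have hup : (up A).sum (fun a => 24 * (a:ℤ) + r)
      = A.sum (fun a => 24 * (a:ℤ) + r) + 24 * A.card := by
    rw [sum_up]
    have h : ∀ a ∈ A, (24 * ((a + 1 : ℕ) : ℤ) + r) = (24 * (a:ℤ) + r) + 24 := by
      intro a _; push_cast; ring
    rw [Finset.sum_congr rfl h, Finset.sum_add_distrib, Finset.sum_const]
    push_cast; ring
  have hdown : (down B).sum (fun b => 24 * (b:ℤ) + (24 - r))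
      = (B.erase 0).sum (fun b => 24 * (b:ℤ) + (24 - r)) - 24 * (B.erase 0).card := by
    rw [sum_down]
    have h : ∀ b ∈ B.erase 0,
        (24 * ((b - 1 : ℕ) : ℤ) + (24 - (r:ℤ))) = (24 * (b:ℤ) + (24 - r)) - 24 := by
      intro b hb; simp only [mem_erase] at hb
      have hb1 : ((b - 1 : ℕ) : ℤ) = (b : ℤ) - 1 := by omega
      rw [hb1]; ring
    rw [Finset.sum_congr rfl h, Finset.sum_sub_distrib, Finset.sum_const]
    push_cast; ring
  unfold psum sig ch
  by_cases hB : 0 ∈ B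
  · have hc : 1 ≤ B.card := card_pos.mpr ⟨0, hB⟩
    have herase : (B.erase 0).sum (fun b => 24 * (b:ℤ) + (24 - r))
        = B.sum (fun b => 24 * (b:ℤ) + (24 - r)) - (24 - r) := by
      have := Finset.sum_erase_add B (fun b => 24 * (b:ℤ) + (24 - r)) hB
      push_cast at this ⊢
      linarith
    have hcard : ((B.erase 0).card : ℤ) = (B.card : ℤ) - 1 := by
      rw [card_erase_of_mem hB]; push_cast [Nat.cast_sub hc]; ring
    simp only [hB, if_true, hup, hdown, herase, hcard]
    push_cast; ring
  · have herase : B.erase 0 = B := erase_eq_of_notMem hB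
    simp only [hB, if_false, Finset.sum_insert (zero_not_mem_up A), hup, hdown, herase]
    push_cast; ring

lemma ch_tau (st : St) : ch (tau st) = ch st - 1 := by
  have h := ch_sig (tau st)
  rw [sig_tau] at h
  omega

lemma psum_tau (r : ℕ) (st : St) : psum r (tau st) = psum r st - 24 * ch st + 24 - r := by
  have h := psum_sig r (tau st)
  rw [sig_tau, ch_tau] at h
  linarith

lemma sigE_apply (st : St) : sigE st = sig st := rfl

lemma sigE_symm_apply (st : St) : sigE.symm st = tau st := rfl

lemma zpow_succ_apply (z : ℤ) (st : St) : (sigE ^ (z + 1)) st = sig ((sigE ^ z) st) := by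
  have h : sigE ^ (z + 1) = sigE * sigE ^ z := by
    rw [← zpow_one_add]; ring_nf
  rw [h, Equiv.Perm.mul_apply]; rfl

lemma zpow_pred_apply (z : ℤ) (st : St) : (sigE ^ (z - 1)) st = tau ((sigE ^ z) st) := by
  have h : sigE ^ (z - 1) = sigE⁻¹ * sigE ^ z := by
    rw [← zpow_neg_one, ← zpow_add]; ring_nf
  rw [h, Equiv.Perm.mul_apply]; rfl

lemma ch_zpow (z : ℤ) (st : St) : ch ((sigE ^ z) st) = ch st + z := by
  induction z using Int.induction_on with
  | zero => simp
  | succ k ih => rw [zpow_succ_apply, ch_sig, ih]; push_cast; ring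
  | pred k ih => rw [show (-(k:ℤ) - 1) = (-(k:ℤ)) - 1 by ring, zpow_pred_apply, ch_tau, ih]
                 push_cast; ring

lemma psum_zpow (r : ℕ) (z : ℤ) (st : St) :
    psum r ((sigE ^ z) st) = psum r st + 24 * z * ch st + 12 * z * (z - 1) + r * z := by
  induction z using Int.induction_on with
  | zero => simp
  | succ k ih =>
      rw [zpow_succ_apply, psum_sig, ih, ch_zpow]
      push_cast; ring
  | pred k ih =>
      rw [show (-(k:ℤ) - 1) = (-(k:ℤ)) - 1 by ring, zpow_pred_apply, psum_tau, ih, ch_zpow]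
      push_cast; ring

/-! ### Charge decomposition -/

abbrev St0 := {st : St // ch st = 0}

def chargeDec : St ≃ ℤ × St0 where
  toFun st := (ch st, ⟨(sigE ^ (-ch st)) st, by rw [ch_zpow]; ring⟩)
  invFun p := (sigE ^ p.1) p.2.val
  left_inv st := by
    show (sigE ^ ch st) ((sigE ^ (-ch st)) st) = st
    rw [← Equiv.Perm.mul_apply, ← zpow_add]
    simp
  right_inv := by
    rintro ⟨z, u, hu⟩
    have hch : ch ((sigE ^ z) u) = z := by rw [ch_zpow, hu, zero_add]
    have hv : (sigE ^ (-ch ((sigE ^ z) u))) ((sigE ^ z) u) = u := by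
      rw [hch, ← Equiv.Perm.mul_apply, ← zpow_add]
      simp
    exact Prod.ext hch (Subtype.ext hv)

def eZ (r : ℕ) (z : ℤ) : ℤ := 12 * z ^ 2 + ((r : ℤ) - 12) * z

lemma psum_charge_zero (r : ℕ) (u : St) (hu : ch u = 0) : psum r u = 24 * rw0 u := by
  unfold psum rw0
  unfold ch at hu
  have h1 : u.1.sum (fun a => 24 * (a:ℤ) + r) = 24 * u.1.sum (fun a => (a:ℤ)) + r * u.1.card := by
    rw [Finset.sum_add_distrib, Finset.mul_sum, Finset.sum_const]
    push_cast; ring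
  have h2 : u.2.sum (fun b => 24 * (b:ℤ) + (24 - r))
      = 24 * u.2.sum (fun b => (b:ℤ)) + (24 - r) * u.2.card := by
    rw [Finset.sum_add_distrib, Finset.mul_sum, Finset.sum_const]
    push_cast; ring
  rw [h1, h2]
  have : (u.1.card : ℤ) = u.2.card := by omega
  rw [this]; ring

lemma psum_chargeDec_symm (r : ℕ) (z : ℤ) (u : St0) :
    psum r (chargeDec.symm (z, u)) = eZ r z + 24 * rw0 u.val := by
  show psum r ((sigE ^ z) u.val) = _
  rw [psum_zpow, u.prop, psum_charge_zero r u.val u.prop, eZ]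
  ring

/-! ### Encoding a finset of parts in classes `r, 24 - r` as a state -/

/-- weight of a finset of parts -/
def W (s : Finset ℕ) : ℤ := s.sum fun k => (k : ℤ)

def pairPred (r : ℕ) (x : ℕ) : Prop := x % 24 = r ∨ x % 24 = 24 - r

instance (r : ℕ) : DecidablePred (pairPred r) := fun x => by unfold pairPred; infer_instance

def pairSet (r : ℕ) (st : St) : Finset ℕ :=
  st.1.image (fun a => 24 * a + r) ∪ st.2.image (fun b => 24 * b + (24 - r))

def extract (r : ℕ) (s : Finset ℕ) : St :=
  ((s.filter (fun k => k % 24 = r)).image (fun k => k / 24),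
   (s.filter (fun k => k % 24 = 24 - r)).image (fun k => k / 24))

variable {r : ℕ}

lemma mem_pairSet (hr1 : 0 < r) (hr2 : r < 12) {st : St} {x : ℕ} :
    x ∈ pairSet r st ↔ (x % 24 = r ∧ x / 24 ∈ st.1) ∨ (x % 24 = 24 - r ∧ x / 24 ∈ st.2) := by
  simp only [pairSet, mem_union, mem_image]
  constructor
  · rintro (⟨a, ha, rfl⟩ | ⟨b, hb, rfl⟩)
    · exact Or.inl ⟨by omega, by rw [show (24 * a + r) / 24 = a by omega]; exact ha⟩
    · exact Or.inr ⟨by omega, by rw [show (24 * b + (24 - r)) / 24 = b by omega]; exact hb⟩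
  · rintro (⟨hx, hd⟩ | ⟨hx, hd⟩)
    · exact Or.inl ⟨x / 24, hd, by omega⟩
    · exact Or.inr ⟨x / 24, hd, by omega⟩

lemma extract_pairSet (hr1 : 0 < r) (hr2 : r < 12) (st : St) :
    extract r (pairSet r st) = st := by
  obtain ⟨A, B⟩ := st
  unfold extract
  refine Prod.ext ?_ ?_ <;> dsimp only <;> ext x <;>
    simp only [mem_image, mem_filter, mem_pairSet hr1 hr2]
  · constructor
    · rintro ⟨k, ⟨hk1, hk2⟩, rfl⟩
      rcases hk1 with ⟨_, h⟩ | ⟨h, _⟩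
      · exact h
      · omega
    · intro hx
      exact ⟨24 * x + r, ⟨Or.inl ⟨by omega, by rw [show (24 * x + r) / 24 = x by omega]; exact hx⟩,
        by omega⟩, by omega⟩
  · constructor
    · rintro ⟨k, ⟨hk1, hk2⟩, rfl⟩
      rcases hk1 with ⟨h, _⟩ | ⟨_, h⟩
      · omega
      · exact h
    · intro hx
      exact ⟨24 * x + (24 - r), ⟨Or.inr ⟨by omega,
        by rw [show (24 * x + (24 - r)) / 24 = x by omega]; exact hx⟩, by omega⟩, by omega⟩

lemma pairSet_extract (hr1 : 0 < r) (hr2 : r < 12) (s : Finset ℕ) (hs : ∀ x ∈ s, pairPred r x) :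
    pairSet r (extract r s) = s := by
  ext x
  simp only [mem_pairSet hr1 hr2, extract, mem_image, mem_filter]
  constructor
  · rintro (⟨hx, ⟨k, ⟨hk, hk2⟩, hke⟩⟩ | ⟨hx, ⟨k, ⟨hk, hk2⟩, hke⟩⟩) <;>
      · have : k = x := by omega
        rwa [← this]
  · intro hx
    rcases hs x hx with h | h
    · exact Or.inl ⟨h, ⟨x, ⟨hx, h⟩, rfl⟩⟩
    · exact Or.inr ⟨by omega, ⟨x, ⟨hx, by omega⟩, rfl⟩⟩

lemma W_pairSet (hr1 : 0 < r) (hr2 : r < 12) (st : St) :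
    W (pairSet r st) = psum r st := by
  unfold W pairSet psum
  have hdisj : Disjoint (st.1.image (fun a => 24 * a + r))
      (st.2.image (fun b => 24 * b + (24 - r))) := by
    rw [Finset.disjoint_left]
    rintro x hx hy
    simp only [mem_image] at hx hy
    obtain ⟨a, _, rfl⟩ := hx
    obtain ⟨b, _, h⟩ := hy
    omega
  rw [Finset.sum_union hdisj, Finset.sum_image (fun a _ b _ h => by omega),
    Finset.sum_image (fun a _ b _ h => by omega)]
  have h1 : ∀ a ∈ st.1, ((24 * a + r : ℕ) : ℤ) = 24 * (a : ℤ) + r := by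
    intro a _; push_cast; ring
  have h2 : ∀ b ∈ st.2, ((24 * b + (24 - r) : ℕ) : ℤ) = 24 * (b : ℤ) + (24 - (r : ℤ)) := by
    intro b _; omega
  rw [Finset.sum_congr rfl h1, Finset.sum_congr rfl h2]

/-- the equivalence between finsets of parts in the pair class and `ℤ × St0`. -/
def classEquiv (hr1 : 0 < r) (hr2 : r < 12) :
    {s : Finset ℕ // ∀ x ∈ s, pairPred r x} ≃ ℤ × St0 :=
  ((Equiv.trans
    { toFun := fun s => extract r s.val
      invFun := fun st => ⟨pairSet r st, fun x hx => by
        rw [mem_pairSet hr1 hr2] at hx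
        unfold pairPred
        tauto⟩
      left_inv := fun s => Subtype.ext (pairSet_extract hr1 hr2 s.val s.prop)
      right_inv := fun st => extract_pairSet hr1 hr2 st }) chargeDec)

lemma W_classEquiv_symm (hr1 : 0 < r) (hr2 : r < 12) (z : ℤ) (u : St0) :
    W ((classEquiv hr1 hr2).symm (z, u)).val = eZ r z + 24 * rw0 u.val := by
  show W (pairSet r (chargeDec.symm (z, u))) = _
  rw [W_pairSet hr1 hr2, psum_chargeDec_symm]

/-! ### Splitting a finset by a predicate -/

open scoped Classical in
/-- Split a finset of parts into those satisfying `q1` and the rest. -/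
noncomputable def splitEquiv (p q1 q2 : ℕ → Prop) (h : ∀ x, p x ↔ q1 x ∨ q2 x)
    (hd : ∀ x, q1 x → q2 x → False) :
    {s : Finset ℕ // ∀ x ∈ s, p x} ≃
      {s : Finset ℕ // ∀ x ∈ s, q1 x} × {s : Finset ℕ // ∀ x ∈ s, q2 x} where
  toFun s := (⟨s.val.filter q1, fun x hx => (Finset.mem_filter.mp hx).2⟩,
    ⟨s.val.filter (fun x => ¬ q1 x), fun x hx => by
      have hx' := Finset.mem_filter.mp hx
      rcases (h x).mp (s.prop x hx'.1) with h1 | h2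
      · exact absurd h1 hx'.2
      · exact h2⟩)
  invFun t := ⟨t.1.val ∪ t.2.val, fun x hx => by
    rcases Finset.mem_union.mp hx with hx | hx
    · exact (h x).mpr (Or.inl (t.1.prop x hx))
    · exact (h x).mpr (Or.inr (t.2.prop x hx))⟩
  left_inv s := Subtype.ext (Finset.filter_union_filter_not_eq _ s.val)
  right_inv t := by
    obtain ⟨⟨s1, h1⟩, ⟨s2, h2⟩⟩ := t
    refine Prod.ext (Subtype.ext ?_) (Subtype.ext ?_) <;> dsimp only <;> ext x <;>
      simp only [Finset.mem_filter, Finset.mem_union]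
    · constructor
      · rintro ⟨hx | hx, hq⟩
        · exact hx
        · exact absurd hq (fun hq => hd x hq (h2 x hx))
      · intro hx
        exact ⟨Or.inl hx, h1 x hx⟩
    · constructor
      · rintro ⟨hx | hx, hq⟩
        · exact absurd (h1 x hx) hq
        · exact hx
      · intro hx
        exact ⟨Or.inr hx, fun hq => hd x hq (h2 x hx)⟩

lemma W_splitEquiv_symm (p q1 q2 : ℕ → Prop) (h : ∀ x, p x ↔ q1 x ∨ q2 x)
    (hd : ∀ x, q1 x → q2 x → False) (t) :
    W ((splitEquiv p q1 q2 h hd).symm t).val = W t.1.val + W t.2.val := by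
  show W (t.1.val ∪ t.2.val) = _
  unfold W
  rw [Finset.sum_union]
  rw [Finset.disjoint_left]
  intro x hx1 hx2
  exact hd x (t.1.prop x hx1) (t.2.prop x hx2)

/-! ### Master equivalences -/

abbrev Y := (ℤ × St0) × (ℤ × St0) × (ℤ × St0) × (ℤ × St0)

def cw (r : ℕ) (p : ℤ × St0) : ℤ := eZ r p.1 + 24 * rw0 p.2.val

def tot (r4 : ℕ) (y : Y) : ℤ := cw 1 y.1 + cw 7 y.2.1 + cw 9 y.2.2.1 + cw r4 y.2.2.2

abbrev qS (r4 : ℕ) (x : ℕ) : Prop :=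
  pairPred 1 x ∨ pairPred 7 x ∨ pairPred 9 x ∨ pairPred r4 x

lemma pairPred_disj {r r' : ℕ} (h1 : 0 < r) (h2 : r < 12) (h3 : 0 < r') (h4 : r' < 12)
    (hne : r ≠ r') : ∀ x, pairPred r x → pairPred r' x → False := by
  intro x hx hy
  unfold pairPred at hx hy
  omega

variable {r4 : ℕ}

noncomputable def master (h1 : 0 < r4) (h2 : r4 < 12) (h3 : r4 ≠ 1) (h4 : r4 ≠ 7) (h5 : r4 ≠ 9) :
    {s : Finset ℕ // ∀ x ∈ s, qS r4 x} ≃ Y :=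
  (splitEquiv _ (pairPred 1) (fun x => pairPred 7 x ∨ pairPred 9 x ∨ pairPred r4 x)
      (fun x => Iff.rfl)
      (by
        rintro x hx (hy | hy | hy)
        · exact pairPred_disj one_pos (by norm_num) (by norm_num) (by norm_num) (by norm_num) x hx hy
        · exact pairPred_disj one_pos (by norm_num) (by norm_num) (by norm_num) (by norm_num) x hx hy
        · exact pairPred_disj one_pos (by norm_num) h1 h2 (Ne.symm h3) x hx hy)).trans
  ((classEquiv one_pos (by norm_num)).prodCongr
  ((splitEquiv _ (pairPred 7) (fun x => pairPred 9 x ∨ pairPred r4 x)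
      (fun x => Iff.rfl)
      (by
        rintro x hx (hy | hy)
        · exact pairPred_disj (by norm_num) (by norm_num) (by norm_num) (by norm_num) (by norm_num) x hx hy
        · exact pairPred_disj (by norm_num) (by norm_num) h1 h2 (Ne.symm h4) x hx hy)).trans
  ((classEquiv (by norm_num : (0:ℕ) < 7) (by norm_num)).prodCongr
  ((splitEquiv _ (pairPred 9) (pairPred r4)
      (fun x => Iff.rfl)
      (fun x hx hy => pairPred_disj (by norm_num) (by norm_num) h1 h2 (Ne.symm h5) x hx hy)).trans
  ((classEquiv (by norm_num : (0:ℕ) < 9) (by norm_num)).prodCongr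
   (classEquiv h1 h2))))))

lemma W_master_symm (h1 : 0 < r4) (h2 : r4 < 12) (h3 : r4 ≠ 1) (h4 : r4 ≠ 7) (h5 : r4 ≠ 9)
    (y : Y) : W (((master h1 h2 h3 h4 h5).symm y).val) = tot r4 y := by
  obtain ⟨⟨z1, u1⟩, ⟨z7, u7⟩, ⟨z9, u9⟩, ⟨z4, u4⟩⟩ := y
  unfold master
  simp only [Equiv.symm_trans_apply, Equiv.prodCongr_symm, Equiv.prodCongr_apply, Prod.map]
  erw [W_splitEquiv_symm, W_splitEquiv_symm, W_splitEquiv_symm,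
    W_classEquiv_symm, W_classEquiv_symm, W_classEquiv_symm, W_classEquiv_symm]
  unfold tot cw
  ring
  all_goals first
    | exact fun x => Iff.rfl
    | (intro x hx hy
       unfold pairPred at hx hy
       rcases hy with hy | hy | hy <;> omega)
    | (intro x hx hy
       unfold pairPred at hx hy
       rcases hy with hy | hy <;> omega)
    | (intro x hx hy
       unfold pairPred at hx hy
       omega)

/-! ### Residue lemmas -/

lemma qS_mod (x : ℕ) : qS r4 x ↔ qS r4 (x % 24) := by
  unfold qS pairPred
  omega

instance (r4 : ℕ) : DecidablePred (qS r4) := fun x => by unfold qS; infer_instance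

lemma mem_S11_iff (x : ℕ) :
    ((x : ZMod 24) ∈ ({1, 7, 9, 11, 13, 15, 17, 23} : Finset (ZMod 24))) ↔ qS 11 x := by
  have key : ∀ m : ℕ, m < 24 →
      (((m : ZMod 24) ∈ ({1, 7, 9, 11, 13, 15, 17, 23} : Finset (ZMod 24))) ↔ qS 11 m) := by
    decide
  rw [← ZMod.natCast_mod x 24, qS_mod]
  exact key (x % 24) (Nat.mod_lt _ (by norm_num))

lemma mem_S5_iff (x : ℕ) :
    ((x : ZMod 24) ∈ ({1, 5, 7, 9, 15, 17, 19, 23} : Finset (ZMod 24))) ↔ qS 5 x := by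
  have key : ∀ m : ℕ, m < 24 →
      (((m : ZMod 24) ∈ ({1, 5, 7, 9, 15, 17, 19, 23} : Finset (ZMod 24))) ↔ qS 5 m) := by
    decide
  rw [← ZMod.natCast_mod x 24, qS_mod]
  exact key (x % 24) (Nat.mod_lt _ (by norm_num))

lemma qS_zero_false (h1 : 0 < r4) (h2 : r4 < 12) : ¬ qS r4 0 := by
  unfold qS pairPred
  omega

/-! ### From partitions to finsets -/

lemma W_eq_cast (s : Finset ℕ) : W s = ((s.sum id : ℕ) : ℤ) := by
  unfold W
  rw [Nat.cast_sum]
  rfl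

lemma sum_mk_multiset (m : Multiset ℕ) (h : m.Nodup) :
    (⟨m, h⟩ : Finset ℕ).sum id = m.sum := by
  show (m.map id).sum = m.sum
  rw [Multiset.map_id]

def partitionEquiv (n : ℕ) (S : Finset (ZMod 24)) (q : ℕ → Prop)
    (hq : ∀ x : ℕ, ((x : ZMod 24) ∈ S) ↔ q x) (hq0 : ¬ q 0) :
    {p : n.Partition // p.parts.Nodup ∧ ∀ x ∈ p.parts, (x : ZMod 24) ∈ S} ≃
      {t : {s : Finset ℕ // ∀ x ∈ s, q x} // W t.val = (n : ℤ)} where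
  toFun p := ⟨⟨⟨p.val.parts, p.prop.1⟩, fun x hx => (hq x).mp (p.prop.2 x hx)⟩, by
    rw [W_eq_cast, sum_mk_multiset _ p.prop.1, p.val.parts_sum]⟩
  invFun t := ⟨⟨t.val.val.val,
      fun {i} hi => Nat.pos_of_ne_zero (fun h => hq0 (h ▸ t.val.prop i hi)), by
        have h1 := t.prop
        rw [W_eq_cast, sum_mk_multiset _ t.val.val.nodup] at h1
        exact_mod_cast h1⟩,
    t.val.val.nodup, fun x hx => (hq x).mpr (t.val.prop x hx)⟩
  left_inv p := Subtype.ext (Nat.Partition.ext rfl)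
  right_inv t := Subtype.ext (Subtype.ext rfl)

/-! ### Counting -/

lemma countRes_eq (n : ℕ) (S : Finset (ZMod 24))
    (h1 : 0 < r4) (h2 : r4 < 12) (h3 : r4 ≠ 1) (h4 : r4 ≠ 7) (h5 : r4 ≠ 9)
    (hq : ∀ x : ℕ, ((x : ZMod 24) ∈ S) ↔ qS r4 x) :
    countRes 24 S n = Nat.card {y : Y // tot r4 y = (n : ℤ)} := by
  unfold countRes
  apply Nat.card_congr
  refine (partitionEquiv n S (qS r4) hq (qS_zero_false h1 h2)).trans ?_
  refine Equiv.subtypeEquiv (master h1 h2 h3 h4 h5) ?_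
  intro t
  have hW := W_master_symm h1 h2 h3 h4 h5 ((master h1 h2 h3 h4 h5) t)
  rw [Equiv.symm_apply_apply] at hW
  rw [hW]

/-! ### The lattice-point bijection on charges -/

def mapF (y : Y) : Y :=
  (((-2 * y.1.1 + y.2.1.1 + 2 * y.2.2.2.1 + 2) / 3, y.1.2),
   ((-2 * y.1.1 - 2 * y.2.1.1 - y.2.2.2.1 + 2) / 3, y.2.1.2),
   y.2.2.1,
   ((-y.1.1 + 2 * y.2.1.1 - 2 * y.2.2.2.1 + 1) / 3, y.2.2.2.2))

def mapB (y : Y) : Y :=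
  (((-2 * y.1.1 - 2 * y.2.1.1 - y.2.2.2.1 + 3) / 3, y.1.2),
   ((y.1.1 - 2 * y.2.1.1 + 2 * y.2.2.2.1) / 3, y.2.1.2),
   y.2.2.1,
   ((2 * y.1.1 - y.2.1.1 - 2 * y.2.2.2.1) / 3, y.2.2.2.2))

section Lattice

variable {N : ℤ}

lemma tot11_expand (a b d c : ℤ) (u1 u7 u9 u4 : St0) :
    tot 11 ((a, u1), (b, u7), (d, u9), (c, u4)) =
      12*a^2 - 11*a + (12*b^2 - 5*b) + (12*d^2 - 3*d) + (12*c^2 - c)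
        + 24*(rw0 u1.val + rw0 u7.val + rw0 u9.val + rw0 u4.val) := by
  unfold tot cw eZ
  push_cast
  ring

lemma tot5_expand (a b d c : ℤ) (u1 u7 u9 u4 : St0) :
    tot 5 ((a, u1), (b, u7), (d, u9), (c, u4)) =
      12*a^2 - 11*a + (12*b^2 - 5*b) + (12*d^2 - 3*d) + (12*c^2 - 7*c)
        + 24*(rw0 u1.val + rw0 u7.val + rw0 u9.val + rw0 u4.val) := by
  unfold tot cw eZ
  push_cast
  ring

lemma dvd_of_tot11 (hN : N % 3 = 1) (a b d c : ℤ) (u1 u7 u9 u4 : St0)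
    (hy : tot 11 ((a, u1), (b, u7), (d, u9), (c, u4)) = N) :
    (3:ℤ) ∣ (-2*a + b + 2*c + 2) := by
  rw [tot11_expand] at hy
  set R := rw0 u1.val + rw0 u7.val + rw0 u9.val + rw0 u4.val with hR
  have h1 : (3:ℤ) ∣ (N - 1) := by omega
  obtain ⟨M, hM⟩ := h1
  exact ⟨M - (4*a^2 - 4*a + 4*b^2 - 2*b + 4*d^2 - d + 4*c^2 - c + 8*R) - a + 1, by linarith⟩

lemma dvd_of_tot5 (hN : N % 3 = 1) (a b d c : ℤ) (u1 u7 u9 u4 : St0)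
    (hy : tot 5 ((a, u1), (b, u7), (d, u9), (c, u4)) = N - 1) :
    (3:ℤ) ∣ (-2*a - 2*b - c + 3) := by
  rw [tot5_expand] at hy
  set R := rw0 u1.val + rw0 u7.val + rw0 u9.val + rw0 u4.val with hR
  have h1 : (3:ℤ) ∣ (N - 1) := by omega
  obtain ⟨M, hM⟩ := h1
  have hABC : (3:ℤ) ∣ (a + b + 2*c) :=
    ⟨M - (4*a^2 - 4*a + 4*b^2 - 2*b + 4*d^2 - d + 4*c^2 - 3*c + 8*R), by linarith⟩
  omega

lemma mapF_tot (hN : N % 3 = 1) (y : Y) (hy : tot 11 y = N) : tot 5 (mapF y) = N - 1 := by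
  obtain ⟨⟨a, u1⟩, ⟨b, u7⟩, ⟨d, u9⟩, ⟨c, u4⟩⟩ := y
  have hd1 : (3:ℤ) ∣ (-2*a + b + 2*c + 2) := dvd_of_tot11 hN a b d c u1 u7 u9 u4 hy
  have hd2 : (3:ℤ) ∣ (-2*a - 2*b - c + 2) := by omega
  have hd3 : (3:ℤ) ∣ (-a + 2*b - 2*c + 1) := by omega
  have h3a : 3 * ((-2*a + b + 2*c + 2) / 3) = -2*a + b + 2*c + 2 := Int.mul_ediv_cancel' hd1
  have h3b : 3 * ((-2*a - 2*b - c + 2) / 3) = -2*a - 2*b - c + 2 := Int.mul_ediv_cancel' hd2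
  have h3c : 3 * ((-a + 2*b - 2*c + 1) / 3) = -a + 2*b - 2*c + 1 := Int.mul_ediv_cancel' hd3
  rw [tot11_expand] at hy
  show tot 5 (((-2*a + b + 2*c + 2) / 3, u1), ((-2*a - 2*b - c + 2) / 3, u7),
    (d, u9), ((-a + 2*b - 2*c + 1) / 3, u4)) = N - 1
  rw [tot5_expand]
  set A := (-2*a + b + 2*c + 2) / 3
  set B := (-2*a - 2*b - c + 2) / 3
  set C := (-a + 2*b - 2*c + 1) / 3
  have key : 3 * (12*A^2 - 11*A + (12*B^2 - 5*B) + (12*d^2 - 3*d) + (12*C^2 - 7*C)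
      + 24*(rw0 u1.val + rw0 u7.val + rw0 u9.val + rw0 u4.val)) = 3*(N - 1) := by
    linear_combination (12*A + 4*(-2*a + b + 2*c + 2) - 11) * h3a
      + (12*B + 4*(-2*a - 2*b - c + 2) - 5) * h3b
      + (12*C + 4*(-a + 2*b - 2*c + 1) - 7) * h3c + 3 * hy
  linarith

lemma mapB_tot (hN : N % 3 = 1) (y : Y) (hy : tot 5 y = N - 1) : tot 11 (mapB y) = N := by
  obtain ⟨⟨a, u1⟩, ⟨b, u7⟩, ⟨d, u9⟩, ⟨c, u4⟩⟩ := y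
  have hd1 : (3:ℤ) ∣ (-2*a - 2*b - c + 3) := dvd_of_tot5 hN a b d c u1 u7 u9 u4 hy
  have hd2 : (3:ℤ) ∣ (a - 2*b + 2*c) := by omega
  have hd3 : (3:ℤ) ∣ (2*a - b - 2*c) := by omega
  have h3a : 3 * ((-2*a - 2*b - c + 3) / 3) = -2*a - 2*b - c + 3 := Int.mul_ediv_cancel' hd1
  have h3b : 3 * ((a - 2*b + 2*c) / 3) = a - 2*b + 2*c := Int.mul_ediv_cancel' hd2
  have h3c : 3 * ((2*a - b - 2*c) / 3) = 2*a - b - 2*c := Int.mul_ediv_cancel' hd3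
  rw [tot5_expand] at hy
  show tot 11 (((-2*a - 2*b - c + 3) / 3, u1), ((a - 2*b + 2*c) / 3, u7),
    (d, u9), ((2*a - b - 2*c) / 3, u4)) = N
  rw [tot11_expand]
  set A := (-2*a - 2*b - c + 3) / 3
  set B := (a - 2*b + 2*c) / 3
  set C := (2*a - b - 2*c) / 3
  have key : 3 * (12*A^2 - 11*A + (12*B^2 - 5*B) + (12*d^2 - 3*d) + (12*C^2 - C)
      + 24*(rw0 u1.val + rw0 u7.val + rw0 u9.val + rw0 u4.val)) = 3*N := by
    linear_combination (12*A + 4*(-2*a - 2*b - c + 3) - 11) * h3a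
      + (12*B + 4*(a - 2*b + 2*c) - 5) * h3b
      + (12*C + 4*(2*a - b - 2*c) - 1) * h3c + 3 * hy
  linarith

lemma mapB_mapF (hN : N % 3 = 1) (y : Y) (hy : tot 11 y = N) : mapB (mapF y) = y := by
  obtain ⟨⟨a, u1⟩, ⟨b, u7⟩, ⟨d, u9⟩, ⟨c, u4⟩⟩ := y
  have hd1 : (3:ℤ) ∣ (-2*a + b + 2*c + 2) := dvd_of_tot11 hN a b d c u1 u7 u9 u4 hy
  have hd2 : (3:ℤ) ∣ (-2*a - 2*b - c + 2) := by omega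
  have hd3 : (3:ℤ) ∣ (-a + 2*b - 2*c + 1) := by omega
  have h3a : 3 * ((-2*a + b + 2*c + 2) / 3) = -2*a + b + 2*c + 2 := Int.mul_ediv_cancel' hd1
  have h3b : 3 * ((-2*a - 2*b - c + 2) / 3) = -2*a - 2*b - c + 2 := Int.mul_ediv_cancel' hd2
  have h3c : 3 * ((-a + 2*b - 2*c + 1) / 3) = -a + 2*b - 2*c + 1 := Int.mul_ediv_cancel' hd3
  show ((((-2 * ((-2*a + b + 2*c + 2) / 3) - 2 * ((-2*a - 2*b - c + 2) / 3)
      - ((-a + 2*b - 2*c + 1) / 3) + 3) / 3), u1),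
    ((((-2*a + b + 2*c + 2) / 3) - 2 * ((-2*a - 2*b - c + 2) / 3)
      + 2 * ((-a + 2*b - 2*c + 1) / 3)) / 3, u7),
    (d, u9),
    ((2 * ((-2*a + b + 2*c + 2) / 3) - ((-2*a - 2*b - c + 2) / 3)
      - 2 * ((-a + 2*b - 2*c + 1) / 3)) / 3, u4)) = ((a, u1), (b, u7), (d, u9), (c, u4))
  have e1 : -2 * ((-2*a + b + 2*c + 2) / 3) - 2 * ((-2*a - 2*b - c + 2) / 3)
      - ((-a + 2*b - 2*c + 1) / 3) + 3 = 3 * a := by omega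
  have e2 : ((-2*a + b + 2*c + 2) / 3) - 2 * ((-2*a - 2*b - c + 2) / 3)
      + 2 * ((-a + 2*b - 2*c + 1) / 3) = 3 * b := by omega
  have e3 : 2 * ((-2*a + b + 2*c + 2) / 3) - ((-2*a - 2*b - c + 2) / 3)
      - 2 * ((-a + 2*b - 2*c + 1) / 3) = 3 * c := by omega
  rw [e1, e2, e3, Int.mul_ediv_cancel_left a (by norm_num), Int.mul_ediv_cancel_left b (by norm_num),
    Int.mul_ediv_cancel_left c (by norm_num)]

lemma mapF_mapB (hN : N % 3 = 1) (y : Y) (hy : tot 5 y = N - 1) : mapF (mapB y) = y := by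
  obtain ⟨⟨a, u1⟩, ⟨b, u7⟩, ⟨d, u9⟩, ⟨c, u4⟩⟩ := y
  have hd1 : (3:ℤ) ∣ (-2*a - 2*b - c + 3) := dvd_of_tot5 hN a b d c u1 u7 u9 u4 hy
  have hd2 : (3:ℤ) ∣ (a - 2*b + 2*c) := by omega
  have hd3 : (3:ℤ) ∣ (2*a - b - 2*c) := by omega
  show (((-2 * ((-2*a - 2*b - c + 3) / 3) + ((a - 2*b + 2*c) / 3)
      + 2 * ((2*a - b - 2*c) / 3) + 2) / 3, u1),
    ((-2 * ((-2*a - 2*b - c + 3) / 3) - 2 * ((a - 2*b + 2*c) / 3)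
      - ((2*a - b - 2*c) / 3) + 2) / 3, u7),
    (d, u9),
    ((-((-2*a - 2*b - c + 3) / 3) + 2 * ((a - 2*b + 2*c) / 3)
      - 2 * ((2*a - b - 2*c) / 3) + 1) / 3, u4)) = ((a, u1), (b, u7), (d, u9), (c, u4))
  have e1 : -2 * ((-2*a - 2*b - c + 3) / 3) + ((a - 2*b + 2*c) / 3)
      + 2 * ((2*a - b - 2*c) / 3) + 2 = 3 * a := by omega
  have e2 : -2 * ((-2*a - 2*b - c + 3) / 3) - 2 * ((a - 2*b + 2*c) / 3)
      - ((2*a - b - 2*c) / 3) + 2 = 3 * b := by omega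
  have e3 : -((-2*a - 2*b - c + 3) / 3) + 2 * ((a - 2*b + 2*c) / 3)
      - 2 * ((2*a - b - 2*c) / 3) + 1 = 3 * c := by omega
  rw [e1, e2, e3, Int.mul_ediv_cancel_left a (by norm_num), Int.mul_ediv_cancel_left b (by norm_num),
    Int.mul_ediv_cancel_left c (by norm_num)]

noncomputable def latticeEquiv (hN : N % 3 = 1) :
    {y : Y // tot 11 y = N} ≃ {y : Y // tot 5 y = N - 1} where
  toFun y := ⟨mapF y.val, mapF_tot hN y.val y.prop⟩
  invFun y := ⟨mapB y.val, mapB_tot hN y.val y.prop⟩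
  left_inv y := Subtype.ext (mapB_mapF hN y.val y.prop)
  right_inv y := Subtype.ext (mapF_mapB hN y.val y.prop)

end Lattice

end OnoAux


/-- Ono's conjecture for `Q`: for every positive `n ≡ 4 (mod 6)`, `Q_5(n-1) = Q_11(n)`. -/
theorem Q5_shift_eq_Q11_of_mod_six (n : ℕ) (hn : 0 < n) (hmod : n % 6 = 4) :
    Q5 (n - 1) = Q11 n := by
  unfold Q5 Q11
  rw [OnoAux.countRes_eq (n - 1) _ (by norm_num) (by norm_num) (by norm_num) (by norm_num)
      (by norm_num) OnoAux.mem_S5_iff,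
    OnoAux.countRes_eq n _ (by norm_num) (by norm_num) (by norm_num) (by norm_num)
      (by norm_num) OnoAux.mem_S11_iff]
  have hN : ((n : ℤ)) % 3 = 1 := by omega
  have hcast : (((n - 1 : ℕ)) : ℤ) = (n : ℤ) - 1 := by omega
  rw [hcast]
  exact (Nat.card_congr (OnoAux.latticeEquiv hN)).symm
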